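/- For non-negative integers N, i, j, the generating function for partitions of n into distinct parts ≤ 2N, with exactly i odd-indexed odd parts and j even-indexed odd parts, equals q^{2i²−i+2j²+j} (−q²;q²)_{N−i−j} · [N choose i, j]_{q⁴}, where [N choose i,j]_q = (q;q)_N / ((q;q)_i (q;q)_j (q;q)_{N−i−j}), interpreted as 0 when i+j > N. -/

import Mathlib

def IsDistinctPartition (π : List ℕ) : Prop :=
  π.Chain' (· > ·) ∧ ∀ p ∈ π, 0 < p

def IsPartition (π : List ℕ) : Prop :=
  π.Chain' (· ≥ ·) ∧ ∀ p ∈ π, 0 < p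

def oddIdxOdd (π : List ℕ) : ℕ :=
  (π.zipIdx.filter fun p => p.2 % 2 == 0 && p.1 % 2 == 1).length

def evenIdxOdd (π : List ℕ) : ℕ :=
  (π.zipIdx.filter fun p => p.2 % 2 == 1 && p.1 % 2 == 1).length

def bgRank (π : List ℕ) : ℤ := (oddIdxOdd π : ℤ) - evenIdxOdd π

def altSum : List ℕ → ℤ
  | [] => 0
  | a :: t => (a : ℤ) - altSum t

noncomputable def gaussPoly : ℕ → ℕ → Polynomial ℚ
  | _, 0 => 1
  | 0, _ + 1 => 0
  | m + 1, r + 1 => gaussPoly m r + Polynomial.X ^ (r + 1) * gaussPoly m (r + 1)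

noncomputable def gaussZ (m : ℕ) (r : ℤ) : Polynomial ℚ :=
  if 0 ≤ r then gaussPoly m r.toNat else 0

noncomputable def P (N i j : ℕ) : PowerSeries ℚ :=
  PowerSeries.mk fun n =>
    (Nat.card {π : List ℕ // IsDistinctPartition π ∧ (∀ p ∈ π, p ≤ N) ∧ π.sum = n ∧
      oddIdxOdd π = i ∧ evenIdxOdd π = j} : ℚ)

private def fodd (n : ℕ) (l : List ℕ) : ℕ :=
  ((l.zipIdx n).filter fun p => p.2 % 2 == 0 && p.1 % 2 == 1).length

private def godd (n : ℕ) (l : List ℕ) : ℕ :=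
  ((l.zipIdx n).filter fun p => p.2 % 2 == 1 && p.1 % 2 == 1).length

private lemma fodd_cons (n a l) : fodd n (a :: l) =
    (if n % 2 = 0 ∧ a % 2 = 1 then 1 else 0) + fodd (n+1) l := by
  simp only [fodd, List.zipIdx_cons, List.filter_cons]
  by_cases h : n % 2 = 0 ∧ a % 2 = 1
  · simp [h.1, h.2, Nat.add_comm]
  · have : ¬ (n % 2 == 0 && a % 2 == 1) = true := by
      simpa [Decidable.not_and_iff_or_not] using h
    simp [this, h]

private lemma godd_cons (n a l) : godd n (a :: l) =
    (if n % 2 = 1 ∧ a % 2 = 1 then 1 else 0) + godd (n+1) l := by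
  simp only [godd, List.zipIdx_cons, List.filter_cons]
  by_cases h : n % 2 = 1 ∧ a % 2 = 1
  · simp [h.1, h.2, Nat.add_comm]
  · have : ¬ (n % 2 == 1 && a % 2 == 1) = true := by
      simpa [Decidable.not_and_iff_or_not] using h
    simp [this, h]

private lemma fg_swap : ∀ (l : List ℕ) (n : ℕ),
    fodd (n+1) l = godd n l ∧ godd (n+1) l = fodd n l := by
  intro l
  induction l with
  | nil => intro n; simp [fodd, godd]
  | cons a l ih =>
    intro n
    rw [fodd_cons, godd_cons, fodd_cons, godd_cons, (ih (n+1)).1, (ih (n+1)).2]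
    constructor
    · congr 1
      have h2 := Nat.mod_two_eq_zero_or_one n
      rcases h2 with h | h <;> simp [Nat.add_mod, h]
    · congr 1
      have h2 := Nat.mod_two_eq_zero_or_one n
      rcases h2 with h | h <;> simp [Nat.add_mod, h]

lemma oddIdxOdd_cons (a : ℕ) (l : List ℕ) :
    oddIdxOdd (a :: l) = (if a % 2 = 1 then 1 else 0) + evenIdxOdd l := by
  have h : oddIdxOdd (a :: l) = fodd 0 (a :: l) := rfl
  rw [h, fodd_cons, (fg_swap l 0).1]
  simp [evenIdxOdd, godd]

lemma evenIdxOdd_cons (a : ℕ) (l : List ℕ) :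
    evenIdxOdd (a :: l) = oddIdxOdd l := by
  have h : evenIdxOdd (a :: l) = godd 0 (a :: l) := rfl
  rw [h, godd_cons, (fg_swap l 0).2]
  simp [oddIdxOdd, fodd]

lemma oddIdxOdd_nil : oddIdxOdd [] = 0 := rfl
lemma evenIdxOdd_nil : evenIdxOdd [] = 0 := rfl


open PowerSeries

lemma gauss_r0 (m : ℕ) : gaussPoly m 0 = 1 := by cases m <;> rfl

lemma gauss_pascal (m r : ℕ) : gaussPoly (m+1) (r+1) =
    gaussPoly m r + Polynomial.X ^ (r + 1) * gaussPoly m (r + 1) := rfl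

lemma gauss_big : ∀ m r, m < r → gaussPoly m r = 0 := by
  intro m
  induction m with
  | zero =>
    intro r h
    match r, h with
    | r+1, _ => rfl
  | succ m ih =>
    intro r h
    match r, h with
    | r+1, h =>
      rw [gauss_pascal, ih r (by omega), ih (r+1) (by omega)]
      simp

lemma gauss_diag : ∀ m, gaussPoly m m = 1 := by
  intro m
  induction m with
  | zero => rfl
  | succ m ih => rw [gauss_pascal, ih, gauss_big m (m+1) (by omega)]; simp

noncomputable def gsPS (m r : ℕ) : PowerSeries ℚ :=
  Polynomial.aeval (PowerSeries.X ^ 4 : PowerSeries ℚ) (gaussPoly m r)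

lemma gs_r0 (m : ℕ) : gsPS m 0 = 1 := by rw [gsPS, gauss_r0, map_one]

lemma gs_diag (m : ℕ) : gsPS m m = 1 := by rw [gsPS, gauss_diag, map_one]

lemma gs_big (m r : ℕ) (h : m < r) : gsPS m r = 0 := by
  rw [gsPS, gauss_big m r h, map_zero]

lemma gs_pascal (m r : ℕ) : gsPS (m+1) (r+1) =
    gsPS m r + PowerSeries.X ^ (4*r+4) * gsPS m (r+1) := by
  rw [gsPS, gauss_pascal, map_add, map_mul, map_pow, Polynomial.aeval_X, gsPS, gsPS,
    ← pow_mul]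
  ring_nf

noncomputable def pkPS (k : ℕ) : PowerSeries ℚ :=
  ∏ n ∈ Finset.range k, (1 - PowerSeries.X ^ (4*n+4))

lemma pk_succ (k : ℕ) : pkPS (k+1) = pkPS k * (1 - PowerSeries.X ^ (4*k+4)) :=
  Finset.prod_range_succ _ _

lemma pk_zero : pkPS 0 = 1 := rfl

lemma pk_ne (k : ℕ) : pkPS k ≠ 0 := by
  intro h
  have h1 : PowerSeries.constantCoeff (pkPS k) = 1 := by
    rw [pkPS, map_prod]
    apply Finset.prod_eq_one
    intro n _
    simp
  rw [h, map_zero] at h1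
  exact one_ne_zero h1.symm

noncomputable def ppPS (k : ℕ) : PowerSeries ℚ :=
  ∏ n ∈ Finset.range k, (1 + PowerSeries.X ^ (2*n+2))

lemma pp_succ (k : ℕ) : ppPS (k+1) = ppPS k * (1 + PowerSeries.X ^ (2*k+2)) :=
  Finset.prod_range_succ _ _

lemma KK : ∀ (n a b : ℕ), a + b = n →
    gsPS (a+b) a * (pkPS a * pkPS b) = pkPS (a+b) := by
  intro n
  induction n using Nat.strong_induction_on with
  | _ n ih =>
    intro a b hn
    match a, b with
    | 0, b => simp [gs_r0, pk_zero]
    | a+1, 0 =>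
      rw [show a+1+0 = a+1 from rfl, gs_diag, pk_zero]
      ring
    | a+1, b+1 =>
      have e1 : a+1+(b+1) = (a+b+1)+1 := by omega
      rw [e1, gs_pascal]
      have K1 := ih (a+b+1) (by omega) a (b+1) (by omega)
      have K2 := ih (a+b+1) (by omega) (a+1) b (by omega)
      rw [show a+(b+1) = a+b+1 from by omega] at K1
      rw [show a+1+b = a+b+1 from by omega] at K2
      rw [pk_succ b] at K1
      rw [pk_succ a] at K2 ⊢
      rw [pk_succ b, pk_succ (a+b+1)]
      linear_combination (1 - PowerSeries.X ^ (4*a+4)) * K1 +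
        PowerSeries.X ^ (4*a+4) * (1 - PowerSeries.X ^ (4*b+4)) * K2

lemma K (a b : ℕ) : gsPS (a+b) a * (pkPS a * pkPS b) = pkPS (a+b) := KK (a+b) a b rfl

lemma K3 (a b c : ℕ) :
    gsPS (a+b+c) a * gsPS (b+c) b * (pkPS a * (pkPS b * pkPS c)) = pkPS (a+b+c) := by
  have h1 := K a (b+c)
  rw [show a+(b+c) = a+b+c from by omega] at h1
  have h2 := K b c
  linear_combination gsPS (a+b+c) a * pkPS a * h2 + h1

lemma pp_zero : ppPS 0 = 1 := Finset.prod_range_zero _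


lemma gsp_zero (m i j : ℕ) (h : m < i + j) : gsPS m i * gsPS (m - i) j = 0 := by
  by_cases hi : m < i
  · rw [gs_big m i hi, zero_mul]
  · rw [gs_big (m-i) j (by omega), mul_zero]

noncomputable def Frhs (N i j : ℕ) : PowerSeries ℚ :=
  PowerSeries.X ^ (2 * i ^ 2 - i + 2 * j ^ 2 + j) *
    (∏ n ∈ Finset.range (N - i - j), (1 + PowerSeries.X ^ (2 * n + 2))) *
    Polynomial.aeval (PowerSeries.X ^ 4 : PowerSeries ℚ)
      (gaussPoly N i * gaussPoly (N - i) j)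

lemma Frhs_eq (N i j : ℕ) : Frhs N i j =
    PowerSeries.X ^ (2 * i ^ 2 - i + 2 * j ^ 2 + j) * ppPS (N-i-j) *
      (gsPS N i * gsPS (N-i) j) := by
  rw [Frhs, map_mul]
  rfl

lemma Frhs_zero (N i j : ℕ) (h : N < i + j) : Frhs N i j = 0 := by
  rw [Frhs_eq, gsp_zero N i j h, mul_zero]

lemma esub (i c : ℕ) : 2*(i+1)^2 - (i+1) + c = 2*i^2+3*i+1 + c := by
  have h : 2*(i+1)^2 = 2*i^2+3*i+1 + (i+1) := by ring
  rw [h, Nat.add_sub_cancel]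

lemma Frec_00 (m : ℕ) : Frhs (m+1) 0 0 = Frhs m 0 0 + X^(2*m+2) * Frhs m 0 0 := by
  rw [Frhs_eq, Frhs_eq]
  rw [show (m+1)-0-0 = m+1 from by omega, show (m+1)-0 = m+1 from by omega,
    show m-0-0 = m from by omega, show m-0 = m from by omega, pp_succ]
  simp only [gs_r0]
  ring

lemma Frec_b2_i0 (b : ℕ) : Frhs (b+1) 0 (b+1) = X^(4*b+3) * Frhs b 0 b := by
  rw [Frhs_eq, Frhs_eq]
  rw [show (b+1)-0-(b+1) = 0 from by omega, show (b+1)-0 = b+1 from by omega,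
    show b-0-b = 0 from by omega, show b-0 = b from by omega, pp_zero, gs_r0, gs_r0,
    gs_diag, gs_diag]
  simp only [Nat.sub_zero]
  ring

lemma Frec_b2_j0 (a : ℕ) : Frhs (a+1) (a+1) 0 = X^(2*a+1) * Frhs a 0 a := by
  rw [Frhs_eq, Frhs_eq]
  rw [show (a+1)-(a+1)-0 = 0 from by omega, show (a+1)-(a+1) = 0 from by omega,
    show a-0-a = 0 from by omega, show a-0 = a from by omega, pp_zero, gs_r0, gs_r0,
    gs_diag, gs_diag]
  simp only [Nat.sub_zero]
  rw [esub a (2*0^2)]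
  ring

lemma one_sub_ne (k : ℕ) : (1 - PowerSeries.X ^ (4*k+4) : PowerSeries ℚ) ≠ 0 := by
  intro h
  have h1 : PowerSeries.constantCoeff (R := ℚ) (1 - PowerSeries.X ^ (4*k+4)) = 1 := by simp
  rw [h, map_zero] at h1
  exact one_ne_zero h1.symm

lemma one_add_ne (k : ℕ) : (1 + PowerSeries.X ^ (2*k+2) : PowerSeries ℚ) ≠ 0 := by
  intro h
  have h1 : PowerSeries.constantCoeff (R := ℚ) (1 + PowerSeries.X ^ (2*k+2)) = 1 := by simp
  rw [h, map_zero] at h1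
  exact one_ne_zero h1.symm

lemma Frec_b2 (a b : ℕ) : Frhs (a+b+1+1) (a+1) (b+1) =
    X^(2*(a+b+1)+1) * Frhs (a+b+1) (b+1) a + X^(4*(a+b+1)+3) * Frhs (a+b+1) (a+1) b := by
  rw [Frhs_eq, Frhs_eq, Frhs_eq]
  rw [show (a+b+1+1)-(a+1)-(b+1) = 0 from by omega, show (a+b+1+1)-(a+1) = b+1 from by omega,
    show (a+b+1)-(b+1)-a = 0 from by omega, show (a+b+1)-(b+1) = a from by omega,
    show (a+b+1)-(a+1)-b = 0 from by omega, show (a+b+1)-(a+1) = b from by omega,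
    pp_zero, esub a (2*(b+1)^2), esub b (2*a^2), esub a (2*b^2)]
  have hL := K3 (a+1) (b+1) 0
  rw [show a+1+(b+1)+0 = a+b+1+1 from by omega, show (b+1)+0 = b+1 from by omega,
    pk_zero, pk_succ a, pk_succ b, pk_succ (a+b+1)] at hL
  have hT3 := K3 (b+1) a 0
  rw [show b+1+a+0 = a+b+1 from by omega, show a+0 = a from by omega,
    pk_zero, pk_succ b] at hT3
  have hT4 := K3 (a+1) b 0
  rw [show a+1+b+0 = a+b+1 from by omega, show b+0 = b from by omega,
    pk_zero, pk_succ a] at hT4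
  refine mul_right_cancel₀ (b := pkPS a * (1 - X^(4*a+4)) * (pkPS b * (1 - X^(4*b+4)))) ?_ ?_
  · exact mul_ne_zero (mul_ne_zero (pk_ne a) (one_sub_ne a))
      (mul_ne_zero (pk_ne b) (one_sub_ne b))
  · linear_combination (X^(2*a^2+3*a+1+2*(b+1)^2+(b+1)) : PowerSeries ℚ) * hL -
      X^(2*(a+b+1)+1) * X^(2*b^2+3*b+1+2*a^2+a) * (1 - X^(4*a+4)) * hT3 -
      X^(4*(a+b+1)+3) * X^(2*a^2+3*a+1+2*b^2+b) * (1 - X^(4*b+4)) * hT4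

lemma Frec_b1_i0 (b m : ℕ) : Frhs (b+m+1+1) 0 (b+1) = Frhs (b+m+1) 0 (b+1) +
    X^(2*(b+m+1)+2) * Frhs (b+m+1) (b+1) 0 + X^(4*(b+m+1)+3) * Frhs (b+m+1) 0 b := by
  rw [Frhs_eq, Frhs_eq, Frhs_eq, Frhs_eq]
  rw [show (b+m+1+1)-0-(b+1) = m+1 from by omega, show (b+m+1+1)-0 = b+m+1+1 from by omega,
    show (b+m+1)-0-(b+1) = m from by omega, show (b+m+1)-0 = b+m+1 from by omega,
    show (b+m+1)-(b+1)-0 = m from by omega, show (b+m+1)-(b+1) = m from by omega,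
    show (b+m+1)-b = m+1 from by omega]
  simp only [Nat.sub_zero, gs_r0, pp_succ m, esub b (2*0^2)]
  have hL := K (b+1) (m+1)
  rw [show (b+1)+(m+1) = b+m+1+1 from by omega, pk_succ b, pk_succ m, pk_succ (b+m+1)] at hL
  have hT1 := K (b+1) m
  rw [show (b+1)+m = b+m+1 from by omega, pk_succ b] at hT1
  have hT4 := K b (m+1)
  rw [show b+(m+1) = b+m+1 from by omega, pk_succ m] at hT4
  refine mul_right_cancel₀ (b := pkPS b * (1 - X^(4*b+4)) * (pkPS m * (1 - X^(4*m+4)))) ?_ ?_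
  · exact mul_ne_zero (mul_ne_zero (pk_ne b) (one_sub_ne b))
      (mul_ne_zero (pk_ne m) (one_sub_ne m))
  · linear_combination
      (X^(2*0^2+2*(b+1)^2+(b+1)) * ppPS m * (1+X^(2*m+2)) : PowerSeries ℚ) * hL -
      X^(2*0^2+2*(b+1)^2+(b+1)) * ppPS m * (1-X^(4*m+4)) * hT1 -
      X^(2*(b+m+1)+2) * X^(2*b^2+3*b+1+2*0^2) * ppPS m * (1-X^(4*m+4)) * hT1 -
      X^(4*(b+m+1)+3) * X^(2*0^2+2*b^2+b) * ppPS m * (1+X^(2*m+2)) * (1-X^(4*b+4)) * hT4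

lemma Frec_b1_j0 (a m : ℕ) : Frhs (a+m+1+1) (a+1) 0 = Frhs (a+m+1) (a+1) 0 +
    X^(2*(a+m+1)+2) * Frhs (a+m+1) 0 (a+1) + X^(2*(a+m+1)+1) * Frhs (a+m+1) 0 a := by
  rw [Frhs_eq, Frhs_eq, Frhs_eq, Frhs_eq]
  rw [show (a+m+1+1)-(a+1)-0 = m+1 from by omega, show (a+m+1+1)-(a+1) = m+1 from by omega,
    show (a+m+1)-(a+1)-0 = m from by omega, show (a+m+1)-(a+1) = m from by omega,
    show (a+m+1)-0-(a+1) = m from by omega, show (a+m+1)-0 = a+m+1 from by omega,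
    show (a+m+1)-a = m+1 from by omega]
  simp only [Nat.sub_zero, gs_r0, pp_succ m, esub a (2*0^2)]
  have hL := K (a+1) (m+1)
  rw [show (a+1)+(m+1) = a+m+1+1 from by omega, pk_succ a, pk_succ m, pk_succ (a+m+1)] at hL
  have hT1 := K (a+1) m
  rw [show (a+1)+m = a+m+1 from by omega, pk_succ a] at hT1
  have hT3 := K a (m+1)
  rw [show a+(m+1) = a+m+1 from by omega, pk_succ m] at hT3
  refine mul_right_cancel₀ (b := pkPS a * (1 - X^(4*a+4)) * (pkPS m * (1 - X^(4*m+4)))) ?_ ?_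
  · exact mul_ne_zero (mul_ne_zero (pk_ne a) (one_sub_ne a))
      (mul_ne_zero (pk_ne m) (one_sub_ne m))
  · linear_combination
      (X^(2*a^2+3*a+1+2*0^2+0) * ppPS m * (1+X^(2*m+2)) : PowerSeries ℚ) * hL -
      X^(2*a^2+3*a+1+2*0^2+0) * ppPS m * (1-X^(4*m+4)) * hT1 -
      X^(2*(a+m+1)+2) * X^(2*0^2+2*(a+1)^2+(a+1)) * ppPS m * (1-X^(4*m+4)) * hT1 -
      X^(2*(a+m+1)+1) * X^(2*0^2+2*a^2+a) * ppPS m * (1+X^(2*m+2)) * (1-X^(4*a+4)) * hT3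

lemma Frec_b1 (a b m : ℕ) : Frhs (a+b+m+2+1) (a+1) (b+1) = Frhs (a+b+m+2) (a+1) (b+1) +
    X^(2*(a+b+m+2)+2) * Frhs (a+b+m+2) (b+1) (a+1) +
    X^(2*(a+b+m+2)+1) * Frhs (a+b+m+2) (b+1) a +
    X^(4*(a+b+m+2)+3) * Frhs (a+b+m+2) (a+1) b := by
  rw [Frhs_eq, Frhs_eq, Frhs_eq, Frhs_eq, Frhs_eq]
  rw [show (a+b+m+2+1)-(a+1)-(b+1) = m+1 from by omega,
    show (a+b+m+2+1)-(a+1) = b+m+2 from by omega,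
    show (a+b+m+2)-(a+1)-(b+1) = m from by omega,
    show (a+b+m+2)-(a+1) = b+m+1 from by omega,
    show (a+b+m+2)-(b+1)-(a+1) = m from by omega,
    show (a+b+m+2)-(b+1) = a+m+1 from by omega,
    show (a+m+1)-a = m+1 from by omega,
    show (b+m+1)-b = m+1 from by omega]
  rw [esub a (2*(b+1)^2), esub b (2*(a+1)^2), esub b (2*a^2), esub a (2*b^2), pp_succ m]
  have hL := K3 (a+1) (b+1) (m+1)
  rw [show (a+1)+(b+1)+(m+1) = a+b+m+2+1 from by omega,
    show (b+1)+(m+1) = b+m+2 from by omega,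
    pk_succ a, pk_succ b, pk_succ m, pk_succ (a+b+m+2)] at hL
  have hT1 := K3 (a+1) (b+1) m
  rw [show (a+1)+(b+1)+m = a+b+m+2 from by omega, show (b+1)+m = b+m+1 from by omega,
    pk_succ a, pk_succ b] at hT1
  have hT2 := K3 (b+1) (a+1) m
  rw [show (b+1)+(a+1)+m = a+b+m+2 from by omega, show (a+1)+m = a+m+1 from by omega,
    pk_succ a, pk_succ b] at hT2
  have hT3 := K3 (b+1) a (m+1)
  rw [show (b+1)+a+(m+1) = a+b+m+2 from by omega, show a+(m+1) = a+m+1 from by omega,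
    pk_succ b, pk_succ m] at hT3
  have hT4 := K3 (a+1) b (m+1)
  rw [show (a+1)+b+(m+1) = a+b+m+2 from by omega, show b+(m+1) = b+m+1 from by omega,
    pk_succ a, pk_succ m] at hT4
  refine mul_right_cancel₀
    (b := pkPS a * (1 - X^(4*a+4)) * ((pkPS b * (1 - X^(4*b+4))) * (pkPS m * (1 - X^(4*m+4))))) ?_ ?_
  · exact mul_ne_zero (mul_ne_zero (pk_ne a) (one_sub_ne a))
      (mul_ne_zero (mul_ne_zero (pk_ne b) (one_sub_ne b))
        (mul_ne_zero (pk_ne m) (one_sub_ne m)))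
  · linear_combination
      (X^(2*a^2+3*a+1+2*(b+1)^2+(b+1)) * ppPS m * (1+X^(2*m+2)) : PowerSeries ℚ) * hL -
      X^(2*a^2+3*a+1+2*(b+1)^2+(b+1)) * ppPS m * (1-X^(4*m+4)) * hT1 -
      X^(2*(a+b+m+2)+2) * X^(2*b^2+3*b+1+2*(a+1)^2+(a+1)) * ppPS m * (1-X^(4*m+4)) * hT2 -
      X^(2*(a+b+m+2)+1) * X^(2*b^2+3*b+1+2*a^2+a) * ppPS m * (1+X^(2*m+2)) * (1-X^(4*a+4)) * hT3 -
      X^(4*(a+b+m+2)+3) * X^(2*a^2+3*a+1+2*b^2+b) * ppPS m * (1+X^(2*m+2)) * (1-X^(4*b+4)) * hT4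

lemma Frec (N i j : ℕ) : Frhs (N+1) i j = Frhs N i j + X^(2*N+2) * Frhs N j i +
    (if i = 0 then 0 else X^(2*N+1) * Frhs N j (i-1)) +
    (if j = 0 then 0 else X^(4*N+3) * Frhs N i (j-1)) := by
  match i, j with
  | 0, 0 =>
    simp only [if_pos rfl, if_true, add_zero]
    exact Frec_00 N
  | 0, b+1 =>
    simp only [if_pos rfl, if_true, if_neg (Nat.succ_ne_zero b), add_zero, Nat.succ_sub_one]
    by_cases h : b+1 ≤ N
    · obtain ⟨m, rfl⟩ : ∃ m, N = b+m+1 := ⟨N-(b+1), by omega⟩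
      exact Frec_b1_i0 b m
    · by_cases h2 : b = N
      · subst h2
        rw [Frhs_zero b 0 (b+1) (by omega), Frhs_zero b (b+1) 0 (by omega)]
        simpa using Frec_b2_i0 b
      · rw [Frhs_zero (N+1) 0 (b+1) (by omega), Frhs_zero N 0 (b+1) (by omega),
          Frhs_zero N (b+1) 0 (by omega), Frhs_zero N 0 b (by omega)]
        simp
  | a+1, 0 =>
    simp only [if_pos rfl, if_true, if_neg (Nat.succ_ne_zero a), add_zero, Nat.succ_sub_one]
    by_cases h : a+1 ≤ N
    · obtain ⟨m, rfl⟩ : ∃ m, N = a+m+1 := ⟨N-(a+1), by omega⟩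
      exact Frec_b1_j0 a m
    · by_cases h2 : a = N
      · subst h2
        rw [Frhs_zero a (a+1) 0 (by omega), Frhs_zero a 0 (a+1) (by omega)]
        simpa using Frec_b2_j0 a
      · rw [Frhs_zero (N+1) (a+1) 0 (by omega), Frhs_zero N (a+1) 0 (by omega),
          Frhs_zero N 0 (a+1) (by omega), Frhs_zero N 0 a (by omega)]
        simp
  | a+1, b+1 =>
    simp only [if_neg (Nat.succ_ne_zero a), if_neg (Nat.succ_ne_zero b), Nat.succ_sub_one]
    by_cases h : a+b+2 ≤ N
    · obtain ⟨m, rfl⟩ : ∃ m, N = a+b+m+2 := ⟨N-(a+b+2), by omega⟩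
      exact Frec_b1 a b m
    · by_cases h2 : a+b+1 = N
      · subst h2
        rw [Frhs_zero (a+b+1) (a+1) (b+1) (by omega), Frhs_zero (a+b+1) (b+1) (a+1) (by omega)]
        rw [Frec_b2 a b]
        ring
      · rw [Frhs_zero (N+1) (a+1) (b+1) (by omega), Frhs_zero N (a+1) (b+1) (by omega),
          Frhs_zero N (b+1) (a+1) (by omega), Frhs_zero N (b+1) a (by omega),
          Frhs_zero N (a+1) b (by omega)]
        simp

def Cond (B n i j : ℕ) (π : List ℕ) : Prop :=
  IsDistinctPartition π ∧ (∀ p ∈ π, p ≤ B) ∧ π.sum = n ∧ oddIdxOdd π = i ∧ evenIdxOdd π = j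

lemma finite_cond_and (B n i j : ℕ) (R : List ℕ → Prop) :
    Finite {π : List ℕ // Cond B n i j π ∧ R π} := by
  have hsub : {π : List ℕ | Cond B n i j π ∧ R π} ⊆
      (fun l : List (Fin (B+1)) => l.map Fin.val) '' {l | l.length ≤ n} := by
    intro π hπ
    obtain ⟨⟨⟨hc, hpos⟩, hb, hs, _, _⟩, _⟩ := hπ
    refine ⟨π.pmap (fun p hp => (⟨p, hp⟩ : Fin (B+1)))
        (fun p hp => by have := hb p hp; omega), ?_, ?_⟩
    · simp only [Set.mem_setOf_eq, List.length_pmap]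
      calc π.length ≤ π.sum := List.length_le_sum_of_one_le _ (fun p hp => hpos p hp)
        _ = n := hs
    · simp [List.map_pmap]
  exact ((List.finite_length_le (Fin (B+1)) n).image _).subset hsub

lemma finite_cond (B n i j : ℕ) : Finite {π : List ℕ // Cond B n i j π} := by
  have := finite_cond_and B n i j (fun _ => True)
  exact Finite.of_injective (fun x => (⟨x.1, x.2, trivial⟩ : {π // Cond B n i j π ∧ True}))
    (fun x y h => Subtype.ext (by simpa using congrArg Subtype.val h))

lemma card_split {α : Type*} (p q : α → Prop) [Finite {x // p x}] :
    Nat.card {x // p x} = Nat.card {x // p x ∧ q x} + Nat.card {x // p x ∧ ¬ q x} := by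
  classical
  have e1 : {x // p x ∧ q x} ≃ {y : {x // p x} // q y.1} :=
    (Equiv.subtypeSubtypeEquivSubtypeInter p q).symm
  have e2 : {x // p x ∧ ¬ q x} ≃ {y : {x // p x} // ¬ q y.1} :=
    (Equiv.subtypeSubtypeEquivSubtypeInter p (fun x => ¬ q x)).symm
  rw [Nat.card_congr e1, Nat.card_congr e2, ← Nat.card_sum]
  exact Nat.card_congr (Equiv.sumCompl (fun y : {x // p x} => q y.1)).symm

lemma head_forced {c : ℕ} {π : List ℕ} (hc : π.Chain' (· > ·)) (hb : ∀ p ∈ π, p ≤ c)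
    (hm : c ∈ π) : ∃ t, π = c :: t ∧ ∀ p ∈ t, p < c := by
  match π with
  | [] => cases hm
  | a :: t =>
    have hpw := List.isChain_iff_pairwise.1 hc
    have hat : ∀ p ∈ t, p < a := fun p hp => (List.pairwise_cons.1 hpw).1 p hp
    rcases List.mem_cons.1 hm with h | h
    · subst h; exact ⟨t, rfl, hat⟩
    · have := hat c h
      have := hb a (List.mem_cons_self)
      omega

lemma classA (N n i j : ℕ) :
    Nat.card {π : List ℕ // (Cond (2*N+2) n i j π ∧ ¬ (2*N+2) ∈ π) ∧ ¬ (2*N+1) ∈ π} =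
      Nat.card {π : List ℕ // Cond (2*N) n i j π} := by
  apply Nat.card_congr
  apply Equiv.subtypeEquivRight
  intro π
  constructor
  · rintro ⟨⟨⟨hd, hb, hs, ho, he⟩, h1⟩, h2⟩
    refine ⟨hd, fun p hp => ?_, hs, ho, he⟩
    have := hb p hp
    rcases Nat.lt_or_ge p (2*N+1) with h | h
    · omega
    · exfalso
      rcases Nat.eq_or_lt_of_le h with h' | h'
      · exact h2 (h' ▸ hp)
      · have : p = 2*N+2 := by omega
        exact h1 (this ▸ hp)
  · rintro ⟨hd, hb, hs, ho, he⟩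
    refine ⟨⟨⟨hd, fun p hp => by have := hb p hp; omega, hs, ho, he⟩, fun h => ?_⟩, fun h => ?_⟩
    · have := hb _ h; omega
    · have := hb _ h; omega

lemma classB (N n i j : ℕ) :
    Nat.card {π : List ℕ // (Cond (2*N+2) n i j π ∧ (2*N+2) ∈ π) ∧ ¬ (2*N+1) ∈ π} =
      if 2*N+2 ≤ n then Nat.card {π : List ℕ // Cond (2*N) (n-(2*N+2)) j i π} else 0 := by
  split_ifs with hn
  · refine (Nat.card_congr (Equiv.ofBijective
      (fun ρ : {π : List ℕ // Cond (2*N) (n-(2*N+2)) j i π} =>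
        (⟨(2*N+2) :: ρ.1, ?_⟩ :
          {π : List ℕ // (Cond (2*N+2) n i j π ∧ (2*N+2) ∈ π) ∧ ¬ (2*N+1) ∈ π}))
      ⟨?_, ?_⟩)).symm
    · obtain ⟨⟨hc, hpos⟩, hb, hs, ho, he⟩ := ρ.2
      refine ⟨⟨⟨⟨?_, ?_⟩, ?_, ?_, ?_, ?_⟩, List.mem_cons_self⟩, ?_⟩
      · exact List.isChain_cons.2 ⟨fun y hy => by
          have := hb y (List.mem_of_mem_head? hy); omega, hc⟩
      · intro p hp
        rcases List.mem_cons.1 hp with h | h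
        · omega
        · exact hpos p h
      · intro p hp
        rcases List.mem_cons.1 hp with h | h
        · omega
        · have := hb p h; omega
      · simp only [List.sum_cons, hs]; omega
      · rw [oddIdxOdd_cons, if_neg (by omega), he, Nat.zero_add]
      · rw [evenIdxOdd_cons, ho]
      · intro hmem
        rcases List.mem_cons.1 hmem with h | h
        · omega
        · have := hb _ h; omega
    · intro ρ₁ ρ₂ h
      exact Subtype.ext (by simpa using congrArg Subtype.val h)
    · rintro ⟨π, ⟨⟨hd, hb, hs, ho, he⟩, h1⟩, h2⟩
      obtain ⟨t, rfl, ht⟩ := head_forced hd.1 hb h1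
      have htb : ∀ p ∈ t, p ≤ 2*N := by
        intro p hp
        have := ht p hp
        have : p ≠ 2*N+1 := fun hh => h2 (hh ▸ List.mem_cons_of_mem _ hp)
        omega
      refine ⟨⟨t, ⟨(List.isChain_cons.1 hd.1).2,
        fun p hp => hd.2 p (List.mem_cons_of_mem _ hp)⟩, htb, ?_, ?_, ?_⟩, rfl⟩
      · simp only [List.sum_cons] at hs; omega
      · rw [evenIdxOdd_cons] at he; exact he
      · rw [oddIdxOdd_cons, if_neg (by omega), Nat.zero_add] at ho; exact ho
  · have : IsEmpty {π : List ℕ // (Cond (2*N+2) n i j π ∧ (2*N+2) ∈ π) ∧ ¬ (2*N+1) ∈ π} := by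
      refine ⟨?_⟩
      rintro ⟨π, ⟨⟨hd, hb, hs, ho, he⟩, h1⟩, h2⟩
      have := List.single_le_sum (l := π) (fun p _ => Nat.zero_le p) _ h1
      omega
    exact Nat.card_of_isEmpty

lemma classC (N n i j : ℕ) :
    Nat.card {π : List ℕ // (Cond (2*N+2) n i j π ∧ ¬ (2*N+2) ∈ π) ∧ (2*N+1) ∈ π} =
      if i ≠ 0 ∧ 2*N+1 ≤ n then
        Nat.card {π : List ℕ // Cond (2*N) (n-(2*N+1)) j (i-1) π} else 0 := by
  split_ifs with hni
  · obtain ⟨hi, hn⟩ := hni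
    refine (Nat.card_congr (Equiv.ofBijective
      (fun ρ : {π : List ℕ // Cond (2*N) (n-(2*N+1)) j (i-1) π} =>
        (⟨(2*N+1) :: ρ.1, ?_⟩ :
          {π : List ℕ // (Cond (2*N+2) n i j π ∧ ¬ (2*N+2) ∈ π) ∧ (2*N+1) ∈ π}))
      ⟨?_, ?_⟩)).symm
    · obtain ⟨⟨hc, hpos⟩, hb, hs, ho, he⟩ := ρ.2
      refine ⟨⟨⟨⟨?_, ?_⟩, ?_, ?_, ?_, ?_⟩, ?_⟩, List.mem_cons_self⟩
      · exact List.isChain_cons.2 ⟨fun y hy => by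
          have := hb y (List.mem_of_mem_head? hy); omega, hc⟩
      · intro p hp
        rcases List.mem_cons.1 hp with h | h
        · omega
        · exact hpos p h
      · intro p hp
        rcases List.mem_cons.1 hp with h | h
        · omega
        · have := hb p h; omega
      · simp only [List.sum_cons, hs]; omega
      · rw [oddIdxOdd_cons, if_pos (by omega), he]; omega
      · rw [evenIdxOdd_cons, ho]
      · intro hmem
        rcases List.mem_cons.1 hmem with h | h
        · omega
        · have := hb _ h; omega
    · intro ρ₁ ρ₂ h
      exact Subtype.ext (by simpa using congrArg Subtype.val h)
    · rintro ⟨π, ⟨⟨hd, hb, hs, ho, he⟩, h1⟩, h2⟩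
      have hb' : ∀ p ∈ π, p ≤ 2*N+1 := by
        intro p hp
        have := hb p hp
        have : p ≠ 2*N+2 := fun hh => h1 (hh ▸ hp)
        omega
      obtain ⟨t, rfl, ht⟩ := head_forced hd.1 hb' h2
      have htb : ∀ p ∈ t, p ≤ 2*N := fun p hp => by have := ht p hp; omega
      refine ⟨⟨t, ⟨(List.isChain_cons.1 hd.1).2,
        fun p hp => hd.2 p (List.mem_cons_of_mem _ hp)⟩, htb, ?_, ?_, ?_⟩, rfl⟩
      · simp only [List.sum_cons] at hs; omega
      · rw [evenIdxOdd_cons] at he; exact he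
      · rw [oddIdxOdd_cons, if_pos (by omega)] at ho; omega
  · have : IsEmpty {π : List ℕ // (Cond (2*N+2) n i j π ∧ ¬ (2*N+2) ∈ π) ∧ (2*N+1) ∈ π} := by
      refine ⟨?_⟩
      rintro ⟨π, ⟨⟨hd, hb, hs, ho, he⟩, h1⟩, h2⟩
      have hb' : ∀ p ∈ π, p ≤ 2*N+1 := by
        intro p hp
        have := hb p hp
        have : p ≠ 2*N+2 := fun hh => h1 (hh ▸ hp)
        omega
      obtain ⟨t, rfl, ht⟩ := head_forced hd.1 hb' h2
      rw [oddIdxOdd_cons, if_pos (by omega)] at ho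
      simp only [List.sum_cons] at hs
      omega
    exact Nat.card_of_isEmpty

lemma classD (N n i j : ℕ) :
    Nat.card {π : List ℕ // (Cond (2*N+2) n i j π ∧ (2*N+2) ∈ π) ∧ (2*N+1) ∈ π} =
      if j ≠ 0 ∧ 4*N+3 ≤ n then
        Nat.card {π : List ℕ // Cond (2*N) (n-(4*N+3)) i (j-1) π} else 0 := by
  have decomp : ∀ π : List ℕ, (Cond (2*N+2) n i j π ∧ (2*N+2) ∈ π) → (2*N+1) ∈ π →
      ∃ u, π = (2*N+2) :: (2*N+1) :: u ∧ (∀ p ∈ u, p ≤ 2*N) := by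
    rintro π ⟨⟨hd, hb, hs, ho, he⟩, h1⟩ h2
    obtain ⟨t, rfl, ht⟩ := head_forced hd.1 hb h1
    have h2t : (2*N+1) ∈ t := by
      rcases List.mem_cons.1 h2 with h | h
      · omega
      · exact h
    have hct : t.Chain' (· > ·) := (List.isChain_cons.1 hd.1).2
    have htb : ∀ p ∈ t, p ≤ 2*N+1 := fun p hp => by have := ht p hp; omega
    obtain ⟨u, rfl, hu⟩ := head_forced hct htb h2t
    exact ⟨u, rfl, fun p hp => by have := hu p hp; omega⟩
  split_ifs with hnj
  · obtain ⟨hj, hn⟩ := hnj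
    refine (Nat.card_congr (Equiv.ofBijective
      (fun ρ : {π : List ℕ // Cond (2*N) (n-(4*N+3)) i (j-1) π} =>
        (⟨(2*N+2) :: (2*N+1) :: ρ.1, ?_⟩ :
          {π : List ℕ // (Cond (2*N+2) n i j π ∧ (2*N+2) ∈ π) ∧ (2*N+1) ∈ π}))
      ⟨?_, ?_⟩)).symm
    · obtain ⟨⟨hc, hpos⟩, hb, hs, ho, he⟩ := ρ.2
      refine ⟨⟨⟨⟨?_, ?_⟩, ?_, ?_, ?_, ?_⟩, List.mem_cons_self⟩,
        List.mem_cons_of_mem _ (List.mem_cons_self)⟩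
      · refine List.isChain_cons.2 ⟨fun y hy => by simp at hy; omega, ?_⟩
        exact List.isChain_cons.2 ⟨fun y hy => by
          have := hb y (List.mem_of_mem_head? hy); omega, hc⟩
      · intro p hp
        rcases List.mem_cons.1 hp with h | h
        · omega
        · rcases List.mem_cons.1 h with h' | h'
          · omega
          · exact hpos p h'
      · intro p hp
        rcases List.mem_cons.1 hp with h | h
        · omega
        · rcases List.mem_cons.1 h with h' | h'
          · omega
          · have := hb p h'; omega
      · simp only [List.sum_cons, hs]; omega
      · rw [oddIdxOdd_cons, if_neg (by omega), evenIdxOdd_cons, ho, Nat.zero_add]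
      · rw [evenIdxOdd_cons, oddIdxOdd_cons, if_pos (by omega), he]; omega
    · intro ρ₁ ρ₂ h
      exact Subtype.ext (by simpa using congrArg Subtype.val h)
    · rintro ⟨π, hπ1, hπ2⟩
      obtain ⟨u, rfl, hub⟩ := decomp π hπ1 hπ2
      obtain ⟨⟨hd, hb, hs, ho, he⟩, h1⟩ := hπ1
      have hcu : u.Chain' (· > ·) := (List.isChain_cons.1 (List.isChain_cons.1 hd.1).2).2
      refine ⟨⟨u, ⟨hcu, fun p hp =>
        hd.2 p (List.mem_cons_of_mem _ (List.mem_cons_of_mem _ hp))⟩, hub, ?_, ?_, ?_⟩, rfl⟩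
      · simp only [List.sum_cons] at hs; omega
      · rw [oddIdxOdd_cons, if_neg (by omega), evenIdxOdd_cons, Nat.zero_add] at ho
        exact ho
      · rw [evenIdxOdd_cons, oddIdxOdd_cons, if_pos (by omega)] at he; omega
  · have : IsEmpty {π : List ℕ // (Cond (2*N+2) n i j π ∧ (2*N+2) ∈ π) ∧ (2*N+1) ∈ π} := by
      refine ⟨?_⟩
      rintro ⟨π, hπ1, hπ2⟩
      obtain ⟨u, rfl, hub⟩ := decomp π hπ1 hπ2
      obtain ⟨⟨hd, hb, hs, ho, he⟩, h1⟩ := hπ1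
      rw [evenIdxOdd_cons, oddIdxOdd_cons, if_pos (by omega)] at he
      simp only [List.sum_cons] at hs
      omega
    exact Nat.card_of_isEmpty


lemma card_rec (N n i j : ℕ) :
    Nat.card {π : List ℕ // Cond (2*N+2) n i j π} =
      Nat.card {π : List ℕ // Cond (2*N) n i j π}
      + (if 2*N+2 ≤ n then Nat.card {π : List ℕ // Cond (2*N) (n-(2*N+2)) j i π} else 0)
      + (if i ≠ 0 ∧ 2*N+1 ≤ n then
          Nat.card {π : List ℕ // Cond (2*N) (n-(2*N+1)) j (i-1) π} else 0)
      + (if j ≠ 0 ∧ 4*N+3 ≤ n then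
          Nat.card {π : List ℕ // Cond (2*N) (n-(4*N+3)) i (j-1) π} else 0) := by
  haveI := finite_cond (2*N+2) n i j
  haveI := finite_cond_and (2*N+2) n i j (fun π => (2*N+2) ∈ π)
  haveI := finite_cond_and (2*N+2) n i j (fun π => ¬ (2*N+2) ∈ π)
  rw [card_split (Cond (2*N+2) n i j) (fun π => (2*N+2) ∈ π),
    card_split (fun π => Cond (2*N+2) n i j π ∧ (2*N+2) ∈ π) (fun π => (2*N+1) ∈ π),
    card_split (fun π => Cond (2*N+2) n i j π ∧ ¬ (2*N+2) ∈ π) (fun π => (2*N+1) ∈ π),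
    classA, classB, classC, classD]
  ring

open PowerSeries

lemma coeffP (B i j n : ℕ) :
    PowerSeries.coeff n (P B i j) = (Nat.card {π : List ℕ // Cond B n i j π} : ℚ) :=
  PowerSeries.coeff_mk n _

lemma nil_of_cond0 {n i j : ℕ} {π : List ℕ} (h : Cond 0 n i j π) :
    π = [] ∧ n = 0 ∧ i = 0 ∧ j = 0 := by
  obtain ⟨⟨hc, hpos⟩, hb, hs, ho, he⟩ := h
  match π with
  | [] =>
    refine ⟨rfl, ?_, ?_, ?_⟩
    · simpa using hs.symm
    · rw [← ho, oddIdxOdd_nil]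
    · rw [← he, evenIdxOdd_nil]
  | a :: t =>
    have := hb a (List.mem_cons_self)
    have := hpos a (List.mem_cons_self)
    omega

lemma P_zero_base (i j : ℕ) (h : ¬ (i = 0 ∧ j = 0)) : P 0 i j = 0 := by
  ext n
  rw [coeffP, map_zero]
  haveI : IsEmpty {π : List ℕ // Cond 0 n i j π} := by
    refine ⟨fun x => ?_⟩
    obtain ⟨-, -, hi, hj⟩ := nil_of_cond0 x.2
    exact h ⟨hi, hj⟩
  rw [Nat.card_of_isEmpty, Nat.cast_zero]

lemma P_one : P 0 0 0 = 1 := by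
  ext n
  rw [coeffP, PowerSeries.coeff_one]
  rcases eq_or_ne n 0 with rfl | hn
  · haveI : Unique {π : List ℕ // Cond 0 0 0 0 π} := by
      refine ⟨⟨⟨[], ⟨List.isChain_nil, by simp⟩, by simp, rfl, oddIdxOdd_nil, evenIdxOdd_nil⟩⟩,
        fun x => Subtype.ext ?_⟩
      exact (nil_of_cond0 x.2).1
    rw [Nat.card_unique]
    simp
  · haveI : IsEmpty {π : List ℕ // Cond 0 n 0 0 π} := by
      refine ⟨fun x => ?_⟩
      obtain ⟨-, h0, -, -⟩ := nil_of_cond0 x.2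
      exact hn h0
    rw [Nat.card_of_isEmpty, if_neg hn]
    simp

lemma ite_helper {α : Type*} [Zero α] {c1 c2 : Prop} [Decidable c1] [Decidable c2] {x : α} :
    (if ¬ c1 ∧ c2 then x else 0) = if c1 then 0 else (if c2 then x else 0) := by
  by_cases h1 : c1 <;> by_cases h2 : c2 <;> simp [h1, h2]

lemma Prec (N i j : ℕ) : P (2*N+2) i j = P (2*N) i j + X^(2*N+2) * P (2*N) j i +
    (if i = 0 then 0 else X^(2*N+1) * P (2*N) j (i-1)) +
    (if j = 0 then 0 else X^(4*N+3) * P (2*N) i (j-1)) := by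
  ext n
  have h := card_rec N n i j
  have hq := congrArg (Nat.cast : ℕ → ℚ) h
  push_cast [apply_ite (Nat.cast : ℕ → ℚ)] at hq
  simp only [map_add, coeffP, PowerSeries.coeff_X_pow_mul',
    apply_ite (PowerSeries.coeff n), map_zero]
  simp only [ne_eq] at hq
  rw [ite_helper, ite_helper] at hq
  exact hq

lemma Frhs_base (i j : ℕ) : P 0 i j = Frhs 0 i j := by
  by_cases h : i = 0 ∧ j = 0
  · obtain ⟨rfl, rfl⟩ := h
    rw [P_one, Frhs_eq]
    norm_num [gs_r0, pp_zero]
  · rw [P_zero_base i j h, Frhs_zero 0 i j (by omega)]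

theorem stmt2 (N i j : ℕ) :
    P (2 * N) i j =
      PowerSeries.X ^ (2 * i ^ 2 - i + 2 * j ^ 2 + j) *
        (∏ n ∈ Finset.range (N - i - j), (1 + PowerSeries.X ^ (2 * n + 2))) *
        Polynomial.aeval (PowerSeries.X ^ 4 : PowerSeries ℚ)
          (gaussPoly N i * gaussPoly (N - i) j) := by
  show P (2 * N) i j = Frhs N i j
  induction N generalizing i j with
  | zero => exact Frhs_base i j
  | succ N ih =>
    rw [show 2*(N+1) = 2*N+2 from by ring, Prec N i j]
    simp only [ih]
    exact (Frec N i j).symm
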